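/- arXiv:2411.04479 — 3 statements merged into one kernel-verified Lean document; each statement's English description precedes it below -/
import Mathlib

section
/- Let M be a partition of Z_q^n into subcubes of the same dimension n-m, let i ≠ j be two coordinates, and let π be a permutation of Z_q. Let R be the set of star patterns of the partition whose entries in both coordinates i and j are numerical. Then for each c ∈ Z_q, the number of patterns p ∈ R with p_i + π(p_j) ≡ c (mod q) is the same (equal to |R|/q). -/
/-- The subcube of `(Z_q)^C` defined by a star pattern `p` (`none` = `*`):
all vectors agreeing with `p` on every coordinate where `p` is numerical. -/
def Subcube {q : ℕ} {C : Type} (p : C → Option (ZMod q)) : Set (C → ZMod q) :=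
  {x | ∀ c : C, ∀ a : ZMod q, p c = some a → x c = a}

/-- The number of numerical entries of a star pattern. -/
noncomputable def numCount {q : ℕ} {C : Type} (p : C → Option (ZMod q)) : ℕ :=
  Nat.card {c : C // (p c).isSome}

/-- The rows of the star matrix `M` define pairwise disjoint subcubes covering the cube. -/
def IsPartitionMatrix (q : ℕ) {R C : Type} (M : R → C → Option (ZMod q)) : Prop :=
  (∀ r r' : R, r ≠ r' → Subcube (M r) ∩ Subcube (M r') = ∅) ∧
  (∀ x : C → ZMod q, ∃ r : R, x ∈ Subcube (M r))

/-- A star matrix is A-primitive if every column has at least one numerical entry. -/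
def APrimitive {q : ℕ} {R C : Type} (M : R → C → Option (ZMod q)) : Prop :=
  ∀ c : C, ∃ r : R, (M r c).isSome

/-- Restriction to star coordinates is a bijection on a subcube. -/
noncomputable def subcubeEquiv {q n : ℕ} (p : Fin n → Option (ZMod q)) :
    Subcube p ≃ ({k : Fin n // p k = none} → ZMod q) where
  toFun x k := x.1 k.1
  invFun y := ⟨fun k => if h : p k = none then y ⟨k, h⟩ else
      (p k).get (Option.ne_none_iff_isSome.mp h),
    fun k a hk => by
      have h : ¬ p k = none := by simp [hk]
      simp only [h, dif_neg, not_false_iff]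
      simp [hk]⟩
  left_inv x := by
    ext k
    by_cases h : p k = none
    · simp [h]
    · obtain ⟨a, hk⟩ := Option.ne_none_iff_exists'.mp h
      have := x.2 k a hk
      simp [h, hk, this]
  right_inv y := by
    ext k
    simp [k.2]

lemma card_stars {q n : ℕ} (p : Fin n → Option (ZMod q)) :
    Fintype.card {k : Fin n // p k = none} = n - numCount p := by
  classical
  have h1 : ∀ k : Fin n, p k = none ↔ ¬ (p k).isSome = true := by
    intro k; cases p k <;> simp
  rw [numCount]
  calc Fintype.card {k : Fin n // p k = none}
      = Fintype.card {k : Fin n // ¬ (p k).isSome = true} :=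
        Fintype.card_congr (Equiv.subtypeEquivRight h1)
    _ = Fintype.card (Fin n) - Fintype.card {k : Fin n // (p k).isSome = true} :=
        Fintype.card_subtype_compl _
    _ = n - numCount p := by rw [Fintype.card_fin, numCount, Nat.card_eq_fintype_card]


lemma card_subcube {q n : ℕ} [NeZero q] (p : Fin n → Option (ZMod q)) :
    Nat.card (Subcube p) = q ^ (n - numCount p) := by
  classical
  rw [Nat.card_congr (subcubeEquiv p), Nat.card_eq_fintype_card, Fintype.card_fun,
    ZMod.card, card_stars]

lemma numCount_le {q n : ℕ} (p : Fin n → Option (ZMod q)) : numCount p ≤ n := by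
  classical
  rw [numCount, Nat.card_eq_fintype_card]
  simpa using Fintype.card_subtype_le (fun c : Fin n => (p c).isSome = true)

lemma numCount_update {q n : ℕ} (p : Fin n → Option (ZMod q)) (k : Fin n)
    (hk : p k = none) (v : ZMod q) :
    numCount (Function.update p k (some v)) = numCount p + 1 := by
  classical
  rw [numCount, numCount, Nat.card_eq_fintype_card, Nat.card_eq_fintype_card,
    Fintype.card_subtype, Fintype.card_subtype]
  have h : Finset.univ.filter (fun c => (Function.update p k (some v) c).isSome)
      = insert k (Finset.univ.filter (fun c => (p c).isSome)) := by
    ext c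
    by_cases h : c = k
    · subst h; simp
    · simp [Function.update_apply, h]
  rw [h, Finset.card_insert_of_notMem (by simp [hk])]

lemma numCount_none {q n : ℕ} :
    numCount (fun _ : Fin n => (none : Option (ZMod q))) = 0 := by
  have : IsEmpty {c : Fin n // ((fun _ : Fin n => (none : Option (ZMod q))) c).isSome} :=
    ⟨fun x => by simpa using x.2⟩
  simp [numCount, Nat.card_of_isEmpty]

/-- When `p i = *`, vectors of the subcube satisfying `x i + π (x j) = c` biject with the
subcube where `i` is pinned to `0` (the `i`-th entry is determined by the rest). -/
noncomputable def equivI {q n : ℕ} (p : Fin n → Option (ZMod q)) (i j : Fin n)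
    (hij : i ≠ j) (π : Equiv.Perm (ZMod q)) (c : ZMod q) (hpi : p i = none) :
    {x : Fin n → ZMod q // x ∈ Subcube p ∧ x i + π (x j) = c} ≃
      Subcube (Function.update p i (some (0 : ZMod q))) where
  toFun x := ⟨Function.update x.1 i 0, fun k a hk => by
    by_cases h : k = i
    · subst h
      rw [Function.update_self] at hk ⊢
      exact Option.some.inj hk
    · rw [Function.update_of_ne h] at hk ⊢
      exact x.2.1 k a hk⟩
  invFun y := ⟨Function.update y.1 i (c - π (y.1 j)), by
    refine ⟨fun k a hk => ?_, ?_⟩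
    · by_cases h : k = i
      · subst h; rw [hpi] at hk; simp at hk
      · rw [Function.update_of_ne h]
        exact y.2 k a (by rw [Function.update_of_ne h]; exact hk)
    · rw [Function.update_self, Function.update_of_ne (Ne.symm hij), sub_add_cancel]⟩
  left_inv x := by
    apply Subtype.ext
    have hj : Function.update x.1 i (0 : ZMod q) j = x.1 j :=
      Function.update_of_ne (Ne.symm hij) _ _
    have hx : x.1 i = c - π (x.1 j) := eq_sub_of_add_eq x.2.2
    simp only [Function.update_idem, hj, ← hx, Function.update_eq_self]
  right_inv y := by
    apply Subtype.ext
    have hy : y.1 i = 0 := y.2 i 0 (by rw [Function.update_self])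
    simp only [Function.update_idem, ← hy, Function.update_eq_self]

/-- Analogous bijection when `p j = *`. -/
noncomputable def equivJ {q n : ℕ} (p : Fin n → Option (ZMod q)) (i j : Fin n)
    (hij : i ≠ j) (π : Equiv.Perm (ZMod q)) (c : ZMod q) (hpj : p j = none) :
    {x : Fin n → ZMod q // x ∈ Subcube p ∧ x i + π (x j) = c} ≃
      Subcube (Function.update p j (some (0 : ZMod q))) where
  toFun x := ⟨Function.update x.1 j 0, fun k a hk => by
    by_cases h : k = j
    · subst h
      rw [Function.update_self] at hk ⊢
      exact Option.some.inj hk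
    · rw [Function.update_of_ne h] at hk ⊢
      exact x.2.1 k a hk⟩
  invFun y := ⟨Function.update y.1 j (π.symm (c - y.1 i)), by
    refine ⟨fun k a hk => ?_, ?_⟩
    · by_cases h : k = j
      · subst h; rw [hpj] at hk; simp at hk
      · rw [Function.update_of_ne h]
        exact y.2 k a (by rw [Function.update_of_ne h]; exact hk)
    · rw [Function.update_self, Function.update_of_ne hij, Equiv.apply_symm_apply]; ring⟩
  left_inv x := by
    apply Subtype.ext
    have hi : Function.update x.1 j (0 : ZMod q) i = x.1 i :=
      Function.update_of_ne hij _ _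
    have h1 : π (x.1 j) = c - x.1 i := eq_sub_of_add_eq' x.2.2
    have hx : x.1 j = π.symm (c - x.1 i) := by rw [← h1, Equiv.symm_apply_apply]
    simp only [Function.update_idem, hi, ← hx, Function.update_eq_self]
  right_inv y := by
    apply Subtype.ext
    have hy : y.1 j = 0 := y.2 j 0 (by rw [Function.update_self])
    simp only [Function.update_idem, ← hy, Function.update_eq_self]

lemma count_none_i {q n : ℕ} [NeZero q] (p : Fin n → Option (ZMod q)) (i j : Fin n)
    (hij : i ≠ j) (π : Equiv.Perm (ZMod q)) (c : ZMod q) (hpi : p i = none) :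
    Nat.card {x : Fin n → ZMod q // x ∈ Subcube p ∧ x i + π (x j) = c}
      = q ^ (n - (numCount p + 1)) := by
  rw [Nat.card_congr (equivI p i j hij π c hpi), card_subcube,
    numCount_update p i hpi 0]

lemma count_none_j {q n : ℕ} [NeZero q] (p : Fin n → Option (ZMod q)) (i j : Fin n)
    (hij : i ≠ j) (π : Equiv.Perm (ZMod q)) (c : ZMod q) (hpj : p j = none) :
    Nat.card {x : Fin n → ZMod q // x ∈ Subcube p ∧ x i + π (x j) = c}
      = q ^ (n - (numCount p + 1)) := by
  rw [Nat.card_congr (equivJ p i j hij π c hpj), card_subcube,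
    numCount_update p j hpj 0]

lemma count_both {q n : ℕ} [NeZero q] (p : Fin n → Option (ZMod q)) (i j : Fin n)
    (π : Equiv.Perm (ZMod q)) (c : ZMod q) (a b : ZMod q)
    (ha : p i = some a) (hb : p j = some b) :
    Nat.card {x : Fin n → ZMod q // x ∈ Subcube p ∧ x i + π (x j) = c}
      = if a + π b = c then q ^ (n - numCount p) else 0 := by
  split
  · next h =>
    have e : {x : Fin n → ZMod q // x ∈ Subcube p ∧ x i + π (x j) = c} ≃ Subcube p :=
      Equiv.subtypeEquivRight (fun x => ⟨fun hx => hx.1,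
        fun hx => ⟨hx, by rw [hx i a ha, hx j b hb, h]⟩⟩)
    rw [Nat.card_congr e, card_subcube]
  · next h =>
    have : IsEmpty {x : Fin n → ZMod q // x ∈ Subcube p ∧ x i + π (x j) = c} :=
      ⟨fun x => h (by rw [← x.2.1 i a ha, ← x.2.1 j b hb]; exact x.2.2)⟩
    exact Nat.card_of_isEmpty


/-- The subcubes of a partition matrix split any counting problem on the cube. -/
lemma card_partition {q n : ℕ} [NeZero q] {R : Type} [Fintype R]
    (M : R → Fin n → Option (ZMod q)) (hpart : IsPartitionMatrix q M)
    (P : (Fin n → ZMod q) → Prop) :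
    Nat.card {x : Fin n → ZMod q // P x} =
      ∑ r : R, Nat.card {x : Fin n → ZMod q // x ∈ Subcube (M r) ∧ P x} := by
  classical
  have huniq : ∀ (x : Fin n → ZMod q) (r r' : R),
      x ∈ Subcube (M r) → x ∈ Subcube (M r') → r = r' := by
    intro x r r' h h'
    by_contra hne
    have h0 := hpart.1 r r' hne
    have hx : x ∈ Subcube (M r) ∩ Subcube (M r') := ⟨h, h'⟩
    rw [h0] at hx
    exact hx
  have e : {x : Fin n → ZMod q // P x} ≃
      Σ r : R, {x : Fin n → ZMod q // x ∈ Subcube (M r) ∧ P x} :=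
    { toFun := fun x => ⟨Classical.choose (hpart.2 x.1),
        ⟨x.1, Classical.choose_spec (hpart.2 x.1), x.2⟩⟩
      invFun := fun s => ⟨s.2.1, s.2.2.2⟩
      left_inv := fun x => rfl
      right_inv := fun s => by
        rcases s with ⟨r, x, hx, hP⟩
        have hr : Classical.choose (hpart.2 x) = r :=
          huniq x _ r (Classical.choose_spec (hpart.2 x)) hx
        subst hr
        rfl }
  rw [Nat.card_congr e, Nat.card_eq_fintype_card, Fintype.card_sigma]
  exact Finset.sum_congr rfl (fun r _ => (Nat.card_eq_fintype_card).symm)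

lemma sum_ite_card {α : Type} [Fintype α] (P : α → Prop) [DecidablePred P] (X : ℕ) :
    ∑ a : α, (if P a then X else 0) = Nat.card {a // P a} * X := by
  rw [Nat.card_eq_fintype_card, Fintype.card_subtype, ← Finset.sum_filter,
    Finset.sum_const, smul_eq_mul]

lemma card_add_card_compl {α : Type} [Fintype α] (P : α → Prop) [DecidablePred P] :
    Nat.card {a // P a} + Nat.card {a // ¬ P a} = Fintype.card α := by
  rw [Nat.card_eq_fintype_card, Nat.card_eq_fintype_card, Fintype.card_subtype_compl]
  have := Fintype.card_subtype_le P
  omega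

/-- Let `R` be the set of rows of the partition matrix `M` having numerical values in both
columns `i` and `j`, and `π` a permutation of `Z_q`. Then for every `c ∈ Z_q` the number of
rows of `R` with `p_i + π(p_j) = c` is the same, namely `|R| / q`. -/
theorem stmt2 (q n m : ℕ) (hq : 2 ≤ q) (hmn : m ≤ n)
    (M : Fin (q ^ m) → Fin n → Option (ZMod q))
    (hpart : IsPartitionMatrix q M)
    (hrows : ∀ r, numCount (M r) = m)
    (i j : Fin n) (hij : i ≠ j) (π : Equiv.Perm (ZMod q)) (c : ZMod q) :
    Nat.card {r : Fin (q ^ m) //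
        ∃ a b : ZMod q, M r i = some a ∧ M r j = some b ∧ a + π b = c} * q =
      Nat.card {r : Fin (q ^ m) // (M r i).isSome ∧ (M r j).isSome} := by
  classical
  haveI : NeZero q := ⟨by omega⟩
  set pV : Fin (q ^ m) → Prop :=
    fun r => ∃ a b : ZMod q, M r i = some a ∧ M r j = some b ∧ a + π b = c with hpV
  set pB : Fin (q ^ m) → Prop :=
    fun r => (M r i).isSome ∧ (M r j).isSome with hpB
  -- total count of solutions of x i + π (x j) = c is q ^ (n-1)
  have htotal : Nat.card {x : Fin n → ZMod q // x i + π (x j) = c} = q ^ (n - 1) := by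
    have e : {x : Fin n → ZMod q // x i + π (x j) = c} ≃
        {x : Fin n → ZMod q //
          x ∈ Subcube (fun _ : Fin n => (none : Option (ZMod q))) ∧ x i + π (x j) = c} :=
      Equiv.subtypeEquivRight (fun x =>
        ⟨fun hx => ⟨fun k a hk => by simp at hk, hx⟩, fun hx => hx.2⟩)
    rw [Nat.card_congr e, count_none_i _ i j hij π c rfl, numCount_none]
  -- per-row counts
  have hrow : ∀ r : Fin (q ^ m),
      Nat.card {x : Fin n → ZMod q // x ∈ Subcube (M r) ∧ x i + π (x j) = c} =
        (if pV r then q ^ (n - m) else 0) + (if pB r then 0 else q ^ (n - (m + 1))) := by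
    intro r
    by_cases hB : pB r
    · obtain ⟨a, ha⟩ := Option.isSome_iff_exists.mp hB.1
      obtain ⟨b, hb⟩ := Option.isSome_iff_exists.mp hB.2
      rw [count_both (M r) i j π c a b ha hb, hrows r, if_pos hB, add_zero]
      by_cases hv : a + π b = c
      · rw [if_pos hv, if_pos ⟨a, b, ha, hb, hv⟩]
      · rw [if_neg hv, if_neg ?_]
        rintro ⟨a', b', ha', hb', h⟩
        rw [ha] at ha'; rw [hb] at hb'
        cases ha'; cases hb'
        exact hv h
    · have hVf : ¬ pV r := by
        rintro ⟨a, b, ha, hb, h⟩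
        exact hB ⟨by simp [ha], by simp [hb]⟩
      rw [if_neg hVf, if_neg hB, zero_add]
      have hB' := hB
      rw [hpB, not_and_or, Option.not_isSome_iff_eq_none, Option.not_isSome_iff_eq_none] at hB'
      rcases hB' with h | h
      · rw [count_none_i (M r) i j hij π c h, hrows r]
      · rw [count_none_j (M r) i j hij π c h, hrows r]
  -- master equation
  have hmaster : q ^ (n - 1) =
      Nat.card {r // pV r} * q ^ (n - m) +
        Nat.card {r // ¬ pB r} * q ^ (n - (m + 1)) := by
    rw [← htotal, card_partition M hpart (fun x => x i + π (x j) = c),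
      Finset.sum_congr rfl (fun r _ => hrow r), Finset.sum_add_distrib,
      sum_ite_card pV (q ^ (n - m))]
    congr 1
    rw [← sum_ite_card (fun r => ¬ pB r) (q ^ (n - (m + 1)))]
    exact Finset.sum_congr rfl (fun r _ => by by_cases h : pB r <;> simp [h])
  have hKL : Nat.card {r // pB r} + Nat.card {r // ¬ pB r} = q ^ m := by
    rw [card_add_card_compl pB, Fintype.card_fin]
  -- either every row meets both columns, or m < n
  have hcases : Nat.card {r // ¬ pB r} = 0 ∨ m + 1 ≤ n := by
    by_cases hE : Nonempty {r // ¬ pB r}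
    · right
      obtain ⟨r, hr⟩ := hE
      have hr2 := hr
      rw [hpB, not_and_or, Option.not_isSome_iff_eq_none,
        Option.not_isSome_iff_eq_none] at hr2
      rcases hr2 with h | h
      · have h3 := numCount_le (Function.update (M r) i (some (0 : ZMod q)))
        rw [numCount_update (M r) i h 0, hrows r] at h3
        exact h3
      · have h3 := numCount_le (Function.update (M r) j (some (0 : ZMod q)))
        rw [numCount_update (M r) j h 0, hrows r] at h3
        exact h3
    · left
      haveI : IsEmpty {r // ¬ pB r} := not_nonempty_iff.mp hE
      exact Nat.card_of_isEmpty
  show Nat.card {r // pV r} * q = Nat.card {r // pB r}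
  -- pure arithmetic from here on
  suffices h : ∀ N K L : ℕ, q ^ (n - 1) = N * q ^ (n - m) + L * q ^ (n - (m + 1)) →
      K + L = q ^ m → (L = 0 ∨ m + 1 ≤ n) → N * q = K by
    exact h _ _ _ hmaster hKL hcases
  clear hmaster hKL hcases htotal hrow hpV hpB pV pB hpart hrows M π c hij
  intro N K L h1 h2 h3
  have hq0 : 0 < q := by omega
  have hn : 1 ≤ n := i.pos
  rcases h3 with h3 | h3
  · subst h3
    have h2' : K = q ^ m := by omega
    rw [zero_mul, add_zero] at h1
    have hmul : (N * q) * q ^ (n - m) = K * q ^ (n - m) := by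
      calc (N * q) * q ^ (n - m) = (N * q ^ (n - m)) * q := by ring
        _ = q ^ (n - 1) * q := by rw [← h1]
        _ = q ^ (n - 1 + 1) := by rw [pow_succ]
        _ = q ^ n := by congr 1; omega
        _ = q ^ (m + (n - m)) := by congr 1; omega
        _ = q ^ m * q ^ (n - m) := by rw [pow_add]
        _ = K * q ^ (n - m) := by rw [h2']
    exact Nat.eq_of_mul_eq_mul_right (pow_pos hq0 _) hmul
  · have e1 : n - 1 = m + (n - m - 1) := by omega
    have e2 : n - m = (n - m - 1) + 1 := by omega
    have e3 : n - (m + 1) = n - m - 1 := by omega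
    rw [e1, e2, e3] at h1
    have hmul : q ^ m * q ^ (n - m - 1) = (N * q + L) * q ^ (n - m - 1) := by
      calc q ^ m * q ^ (n - m - 1) = q ^ (m + (n - m - 1)) := by rw [pow_add]
        _ = N * q ^ ((n - m - 1) + 1) + L * q ^ (n - m - 1) := h1
        _ = (N * q + L) * q ^ (n - m - 1) := by rw [pow_succ]; ring
    have h4 := Nat.eq_of_mul_eq_mul_right (pow_pos hq0 _) hmul
    rw [h4] at h2
    exact (Nat.add_right_cancel h2).symm
end

section
/- For any two distinct rows of the fractal star matrix M_{q,m}, there is a column in which both rows have numerical values and these values differ. -/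
/-- Number of rows of the fractal matrix `M_{q,m}`. -/
def Nrows (q : ℕ) : ℕ → ℕ
  | 0 => 1
  | m + 1 => q * Nrows q m

/-- Number of columns of the fractal matrix `M_{q,m}`. -/
def Ncols (q : ℕ) : ℕ → ℕ
  | 0 => 0
  | m + 1 => 1 + q * Ncols q m

/-- Entry of the fractal matrix `M_{q,m}` in row `r`, column `c` (as natural number
indices): `M_{q,0}` has one row and no columns; `M_{q,m+1}` consists of `q` horizontal
stripes indexed by `a ∈ Z_q`, stripe `a` having the constant value `a` in the first
column, a copy of `M_{q,m}` in the `a`-th of `q` column blocks, and all-stars elsewhere. -/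
def fractalEntry (q : ℕ) : ℕ → ℕ → ℕ → Option (ZMod q)
  | 0, _, _ => none
  | m + 1, r, c =>
    if c = 0 then some (Nat.cast (r / Nrows q m))
    else if (c - 1) / Ncols q m = r / Nrows q m then
      fractalEntry q m (r % Nrows q m) ((c - 1) % Ncols q m)
    else none

/-- The fractal star matrix `M_{q,m}`. -/
def fractalMatrix (q m : ℕ) : Fin (Nrows q m) → Fin (Ncols q m) → Option (ZMod q) :=
  fun r c => fractalEntry q m r.1 c.1

lemma Nrows_pos (q : ℕ) (hq : 1 ≤ q) : ∀ m, 0 < Nrows q m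
  | 0 => Nat.one_pos
  | m+1 => by simpa [Nrows] using Nat.mul_pos hq (Nrows_pos q hq m)

lemma auxKey (q : ℕ) (hq : 2 ≤ q) :
    ∀ m (r r' : ℕ), r < Nrows q m → r' < Nrows q m → r ≠ r' →
    ∃ c < Ncols q m, ∃ a b : ZMod q,
      fractalEntry q m r c = some a ∧ fractalEntry q m r' c = some b ∧ a ≠ b := by
  intro m
  induction m with
  | zero =>
    intro r r' hr hr' hne
    simp [Nrows] at hr hr'
    omega
  | succ m ih =>
    intro r r' hr hr' hne
    have hN : 0 < Nrows q m := Nrows_pos q (by omega) m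
    have hrq : r / Nrows q m < q := by
      apply Nat.div_lt_of_lt_mul
      simpa [Nrows, Nat.mul_comm] using hr
    have hr'q : r' / Nrows q m < q := by
      apply Nat.div_lt_of_lt_mul
      simpa [Nrows, Nat.mul_comm] using hr'
    by_cases hd : r / Nrows q m = r' / Nrows q m
    · -- same stripe, recurse
      have e1 := Nat.div_add_mod r (Nrows q m)
      have e2 := Nat.div_add_mod r' (Nrows q m)
      have hmod : r % Nrows q m ≠ r' % Nrows q m := by
        intro h; apply hne; rw [hd, h] at e1; omega
      obtain ⟨c, hc, a, b, ha, hb, hab⟩ := ih (r % Nrows q m) (r' % Nrows q m)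
        (Nat.mod_lt _ hN) (Nat.mod_lt _ hN) hmod
      have hL : 0 < Ncols q m := lt_of_le_of_lt (Nat.zero_le _) hc
      set d := r / Nrows q m with hdd
      refine ⟨1 + d * Ncols q m + c, ?_, a, b, ?_, ?_, hab⟩
      · simp only [Ncols]
        have : d * Ncols q m + c < q * Ncols q m := by
          calc d * Ncols q m + c < d * Ncols q m + Ncols q m := by omega
          _ = (d + 1) * Ncols q m := by ring
          _ ≤ q * Ncols q m := Nat.mul_le_mul_right _ (by omega)
        omega
      · show fractalEntry q (m+1) r _ = some a
        have h0 : 1 + d * Ncols q m + c ≠ 0 := by omega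
        have h1 : (1 + d * Ncols q m + c - 1) = d * Ncols q m + c := by omega
        have h2 : (d * Ncols q m + c) / Ncols q m = d := by
          rw [Nat.mul_comm, Nat.mul_add_div hL, Nat.div_eq_of_lt hc]; omega
        have h3 : (d * Ncols q m + c) % Ncols q m = c := by
          rw [Nat.mul_comm, Nat.mul_add_mod, Nat.mod_eq_of_lt hc]
        simp only [fractalEntry, if_neg h0, h1, h2, h3, ← hdd, if_pos rfl]
        exact ha
      · show fractalEntry q (m+1) r' _ = some b
        have h0 : 1 + d * Ncols q m + c ≠ 0 := by omega
        have h1 : (1 + d * Ncols q m + c - 1) = d * Ncols q m + c := by omega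
        have h2 : (d * Ncols q m + c) / Ncols q m = d := by
          rw [Nat.mul_comm, Nat.mul_add_div hL, Nat.div_eq_of_lt hc]; omega
        have h3 : (d * Ncols q m + c) % Ncols q m = c := by
          rw [Nat.mul_comm, Nat.mul_add_mod, Nat.mod_eq_of_lt hc]
        simp only [fractalEntry, if_neg h0, h1, h2, ← hd, ← hdd, if_pos rfl, h3]
        exact hb
    · -- different stripe, column 0
      haveI : NeZero q := ⟨by omega⟩
      refine ⟨0, ?_, (r / Nrows q m : ZMod q), (r' / Nrows q m : ZMod q), ?_, ?_, ?_⟩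
      · simp only [Ncols]; omega
      · simp [fractalEntry]
      · simp [fractalEntry]
      · intro h
        apply hd
        have := congrArg ZMod.val h
        rwa [ZMod.val_natCast_of_lt hrq, ZMod.val_natCast_of_lt hr'q] at this

/-- For any two distinct rows of `M_{q,m}` there is a column in which both rows
have numerical values and these values differ. -/
theorem stmt7 (q m : ℕ) (hq : 2 ≤ q) (hm : 1 ≤ m)
    (r r' : Fin (Nrows q m)) (hne : r ≠ r') :
    ∃ c : Fin (Ncols q m), ∃ a b : ZMod q,
      fractalMatrix q m r c = some a ∧ fractalMatrix q m r' c = some b ∧ a ≠ b := by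
  obtain ⟨c, hc, a, b, ha, hb, hab⟩ :=
    auxKey q hq m r.1 r'.1 r.2 r'.2 (fun h => hne (Fin.ext h))
  exact ⟨⟨c, hc⟩, a, b, ha, hb, hab⟩
end

section
/- Let M be a star matrix of a partition of Z_q^n into subcubes of the same dimension containing a transfractal T, let t be a column of M belonging to T and s a column of M not belonging to T. Then either the columns t and s do not overlap (no row has numerical values in both), or every row with a numerical value in column t also has a numerical value in column s, and all these values in column s are equal to a single number a ∈ Z_q. -/
/-- A transfractal of the star matrix `M`: a submatrix (given by the injections `ρ` on rows
and `γ` on columns) which, up to these identifications, equals the fractal matrix `M_{q,l}`,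
and such that every column of `M` through the submatrix has only stars outside its rows. -/
structure Transfractal (q : ℕ) {R : Type} {n : ℕ} (M : R → Fin n → Option (ZMod q))
    (l : ℕ) where
  ρ : Fin (Nrows q l) ↪ R
  γ : Fin (Ncols q l) ↪ Fin n
  eq_fractal : ∀ i j, M (ρ i) (γ j) = fractalMatrix q l i j
  stars_outside : ∀ j : Fin (Ncols q l), ∀ r : R, (∀ i, ρ i ≠ r) → M r (γ j) = none

lemma nrows_pos (q : ℕ) (hq : 1 ≤ q) (l : ℕ) : 0 < Nrows q l := by
  induction l with
  | zero => simp [Nrows]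
  | succ m ih => simpa [Nrows] using Nat.mul_pos (by omega) ih

lemma fractal_disjoint (q : ℕ) (hq : 2 ≤ q) (l : ℕ) :
    ∀ r r' : ℕ, r < Nrows q l → r' < Nrows q l → r ≠ r' →
    ∃ c, c < Ncols q l ∧ ∃ a b : ZMod q,
      fractalEntry q l r c = some a ∧ fractalEntry q l r' c = some b ∧ a ≠ b := by
  haveI : NeZero q := ⟨by omega⟩
  induction l with
  | zero => intro r r' hr hr' hne; simp [Nrows] at hr hr'; omega
  | succ m ih =>
    intro r r' hr hr' hne
    have hN : 0 < Nrows q m := nrows_pos q (by omega) m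
    simp only [Nrows] at hr hr'
    by_cases hd : r / Nrows q m = r' / Nrows q m
    · have hmod : r % Nrows q m ≠ r' % Nrows q m := by
        intro h
        have e1 := Nat.div_add_mod r (Nrows q m)
        have e2 := Nat.div_add_mod r' (Nrows q m)
        have e3 : Nrows q m * (r / Nrows q m) = Nrows q m * (r' / Nrows q m) := by rw [hd]
        omega
      obtain ⟨c0, hc0, a, b, ha, hb, hab⟩ :=
        ih (r % Nrows q m) (r' % Nrows q m) (Nat.mod_lt _ hN) (Nat.mod_lt _ hN) hmod
      have hK : 0 < Ncols q m := by omega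
      have hdq : r / Nrows q m < q := Nat.div_lt_of_lt_mul (by rw [Nat.mul_comm]; omega)
      have key : r / Nrows q m * Ncols q m + Ncols q m ≤ q * Ncols q m := by
        have := Nat.mul_le_mul_right (Ncols q m) (by omega : r / Nrows q m + 1 ≤ q)
        rwa [Nat.add_mul, one_mul] at this
      have entry : ∀ u : ℕ, u / Nrows q m = r / Nrows q m →
          fractalEntry q (m + 1) u (1 + (r / Nrows q m) * Ncols q m + c0)
            = fractalEntry q m (u % Nrows q m) c0 := by
        intro u hud
        have h1 : (1 + (r / Nrows q m) * Ncols q m + c0 - 1)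
            = c0 + (r / Nrows q m) * Ncols q m := by omega
        simp only [fractalEntry,
          if_neg (by omega : ¬ 1 + (r / Nrows q m) * Ncols q m + c0 = 0), h1]
        rw [Nat.add_mul_div_right _ _ hK, Nat.div_eq_of_lt hc0, Nat.add_mul_mod_self_right,
          Nat.mod_eq_of_lt hc0, hud]
        simp
      refine ⟨1 + (r / Nrows q m) * Ncols q m + c0, ?_, a, b, ?_, ?_, hab⟩
      · simp only [Ncols]; omega
      · rw [entry r rfl]; exact ha
      · rw [entry r' hd.symm]; exact hb
    · refine ⟨0, by simp [Ncols], Nat.cast (r / Nrows q m), Nat.cast (r' / Nrows q m),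
        by simp [fractalEntry], by simp [fractalEntry], ?_⟩
      intro h
      have h1 : r / Nrows q m < q := Nat.div_lt_of_lt_mul (by rw [Nat.mul_comm]; omega)
      have h2 : r' / Nrows q m < q := Nat.div_lt_of_lt_mul (by rw [Nat.mul_comm]; omega)
      exact hd (by
        have := congrArg ZMod.val h
        rwa [ZMod.val_natCast_of_lt h1, ZMod.val_natCast_of_lt h2] at this)

lemma transfractal_agree {q n l : ℕ} (hq : 2 ≤ q) {R : Type}
    (M : R → Fin n → Option (ZMod q))
    (hpart : IsPartitionMatrix q M) (T : Transfractal q M l)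
    (s : Fin n) (hs : ∀ j', T.γ j' ≠ s)
    (i i' : Fin (Nrows q l)) (a : ZMod q) (ha : M (T.ρ i) s = some a) :
    M (T.ρ i') s = some a := by
  classical
  haveI : Fact (1 < q) := ⟨by omega⟩
  by_contra hcon
  set p' := M (T.ρ i') with hp'
  set y : Fin n → ZMod q :=
    fun c => if c = s ∧ p' s = none then a + 1 else (p' c).getD 0 with hy_def
  have hy : y ∈ Subcube p' := by
    intro c b hb
    by_cases hcs : c = s ∧ p' s = none
    · exfalso; rw [hcs.1, hcs.2] at hb; cases hb
    · simp [hy_def, hcs, hb]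
  have hys : y s ≠ a := by
    by_cases h0 : p' s = none
    · have : y s = a + 1 := by simp [hy_def, h0]
      rw [this]
      intro h
      exact one_ne_zero (by linear_combination h - (a : ZMod q))
    · obtain ⟨b, hb⟩ := Option.ne_none_iff_exists'.mp h0
      have : y s = b := by simp [hy_def, h0, hb]
      rw [this]
      intro h
      exact hcon (by rw [hb, h])
  set z : Fin n → ZMod q :=
    fun c => if ∃ j', T.γ j' = c then (M (T.ρ i) c).getD 0 else y c with hz_def
  obtain ⟨r, hz⟩ := hpart.2 z
  by_cases hr : ∃ i'', T.ρ i'' = r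
  · obtain ⟨i'', rfl⟩ := hr
    have hii : i'' = i := by
      by_contra hne
      obtain ⟨c0, hc0, v1, v2, hv1, hv2, hvne⟩ :=
        fractal_disjoint q hq l i.1 i''.1 i.2 i''.2 (fun h => hne (Fin.ext h).symm)
      set j0 : Fin (Ncols q l) := ⟨c0, hc0⟩ with hj0
      have e1 : M (T.ρ i) (T.γ j0) = some v1 := by
        rw [T.eq_fractal]; exact hv1
      have e2 : M (T.ρ i'') (T.γ j0) = some v2 := by
        rw [T.eq_fractal]; exact hv2
      have hz1 : z (T.γ j0) = v1 := by
        have hex : ∃ j', T.γ j' = T.γ j0 := ⟨j0, rfl⟩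
        simp [hz_def, hex, e1]
      have hz2 : z (T.γ j0) = v2 := hz _ _ e2
      exact hvne (hz1 ▸ hz2)
    subst hii
    have hza : z s = a := hz s a ha
    have hzs : z s = y s := by
      have hnex : ¬ ∃ j', T.γ j' = s := by
        rintro ⟨j', hj'⟩; exact hs j' hj'
      simp [hz_def, hnex]
    exact hys (hzs ▸ hza)
  · have hyr : y ∈ Subcube (M r) := by
      intro c b hb
      by_cases hc : ∃ j', T.γ j' = c
      · obtain ⟨j', rfl⟩ := hc
        rw [T.stars_outside j' r (fun i0 h => hr ⟨i0, h⟩)] at hb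
        cases hb
      · have := hz c b hb
        simpa [hz_def, hc] using this
    have hne : T.ρ i' ≠ r := fun h => hr ⟨i', h⟩
    have hdisj := hpart.1 _ _ hne
    have : y ∈ Subcube (M (T.ρ i')) ∩ Subcube (M r) := ⟨hy, hyr⟩
    rw [hdisj] at this
    exact this

/-- Let `t = γ j` be a column of `M` belonging to the transfractal `T` and `s` a column of
`M` outside `T`. Then either `t` and `s` do not overlap, or every row with a number in
column `t` also has a number in column `s`, and all those values equal one number `a`. -/
theorem stmt12 (q n m l : ℕ) (hq : 2 ≤ q)
    (M : Fin (q ^ m) → Fin n → Option (ZMod q))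
    (hpart : IsPartitionMatrix q M)
    (hrows : ∀ r, numCount (M r) = m)
    (T : Transfractal q M l)
    (j : Fin (Ncols q l)) (s : Fin n) (hs : ∀ j', T.γ j' ≠ s) :
    (∀ r : Fin (q ^ m), (M r (T.γ j)).isSome → M r s = none) ∨
    (∃ a : ZMod q, ∀ r : Fin (q ^ m), (M r (T.γ j)).isSome → M r s = some a) := by
  classical
  have i0 : Fin (Nrows q l) := ⟨0, nrows_pos q (by omega) l⟩
  have key := fun i i' a ha =>
    transfractal_agree hq M hpart T s hs i i' a ha
  have mem : ∀ r : Fin (q ^ m), (M r (T.γ j)).isSome → ∃ i, T.ρ i = r := by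
    intro r hr
    by_contra h'
    push_neg at h'
    rw [T.stars_outside j r h'] at hr
    simp at hr
  rcases h0 : M (T.ρ i0) s with _ | a
  · left
    intro r hr
    obtain ⟨i, rfl⟩ := mem r hr
    rcases hM : M (T.ρ i) s with _ | b
    · rfl
    · exact absurd (key i i0 b hM) (by rw [h0]; simp)
  · right
    refine ⟨a, fun r hr => ?_⟩
    obtain ⟨i, rfl⟩ := mem r hr
    exact key i0 i a h0
end
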